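/- Suppose Δ₁ and Δ₂ are simplicial complexes on disjoint vertex sets in ℕ, each sortable with respect to labelings such that every vertex of Δ₁ is smaller than every vertex of Δ₂. For F₁, G₁ ∈ Δ₁ and F₂, G₂ ∈ Δ₂ with sort(F₁,G₁) = (F₁',G₁') and sort(F₂,G₂) = (F₂',G₂'): if |F₁| + |G₁| is even then sort(F₁∪F₂, G₁∪G₂) = (F₁'∪F₂', G₁'∪G₂'), and if |F₁| + |G₁| is odd then sort(F₁∪F₂, G₁∪G₂) = (F₁'∪G₂', G₁'∪F₂'). -/

import Mathlib

/-- The first component of the sorting `sort(F,G)`: the elements at odd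
positions (1-indexed) of the weakly increasing list of the multiset union of `F` and `G`. -/
def sortFst (F G : Finset ℕ) : Finset ℕ :=
  ((((F.val + G.val).sort (· ≤ ·)).zipIdx.filter (fun p => p.2 % 2 = 0)).map Prod.fst).toFinset

/-- The second component of the sorting `sort(F,G)`: the elements at even
positions (1-indexed). -/
def sortSnd (F G : Finset ℕ) : Finset ℕ :=
  ((((F.val + G.val).sort (· ≤ ·)).zipIdx.filter (fun p => p.2 % 2 = 1)).map Prod.fst).toFinset

def SortableWrt (Δ : Set (Finset ℕ)) : Prop :=
  ∀ F ∈ Δ, ∀ G ∈ Δ, sortFst F G ∈ Δ ∧ sortSnd F G ∈ Δ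

def vertexSet (Δ : Set (Finset ℕ)) : Set ℕ := ⋃ F ∈ Δ, (↑F : Set ℕ)

mutual
  def takeEven : List ℕ → List ℕ
    | [] => []
    | a :: l => a :: takeOdd l
  def takeOdd : List ℕ → List ℕ
    | [] => []
    | _ :: l => takeEven l
end

lemma enumFrom_filter_parity (l : List ℕ) : ∀ n : ℕ,
    (((List.zipIdx l n).filter (fun p => p.2 % 2 = 0)).map Prod.fst
      = if n % 2 = 0 then takeEven l else takeOdd l) ∧
    (((List.zipIdx l n).filter (fun p => p.2 % 2 = 1)).map Prod.fst
      = if n % 2 = 0 then takeOdd l else takeEven l) := by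
  induction l with
  | nil => intro n; simp [takeEven, takeOdd]
  | cons a l ih =>
    intro n
    rcases Nat.even_or_odd n with h | h
    · have hn : n % 2 = 0 := Nat.even_iff.mp h
      have hn1 : (n + 1) % 2 = 1 := by omega
      simp [List.zipIdx_cons, List.filter, hn, hn1, (ih (n + 1)).1, (ih (n + 1)).2,
        takeEven, takeOdd]
    · have hn : n % 2 = 1 := Nat.odd_iff.mp h
      have hn1 : (n + 1) % 2 = 0 := by omega
      simp [List.zipIdx_cons, List.filter, hn, hn1, (ih (n + 1)).1, (ih (n + 1)).2,
        takeEven, takeOdd]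

lemma sortFst_eq (F G : Finset ℕ) :
    sortFst F G = (takeEven (((F.val + G.val).sort (· ≤ ·)))).toFinset := by
  rw [sortFst, (enumFrom_filter_parity _ 0).1]
  simp

lemma sortSnd_eq (F G : Finset ℕ) :
    sortSnd F G = (takeOdd (((F.val + G.val).sort (· ≤ ·)))).toFinset := by
  rw [sortSnd, (enumFrom_filter_parity _ 0).2]
  simp

lemma takeEven_append (l₁ : List ℕ) : ∀ l₂ : List ℕ,
    (takeEven (l₁ ++ l₂)
      = takeEven l₁ ++ (if Even l₁.length then takeEven l₂ else takeOdd l₂)) ∧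
    (takeOdd (l₁ ++ l₂)
      = takeOdd l₁ ++ (if Even l₁.length then takeOdd l₂ else takeEven l₂)) := by
  induction l₁ with
  | nil => intro l₂; simp [takeEven, takeOdd]
  | cons a l ih =>
    intro l₂
    have hpar : Even (a :: l).length ↔ ¬ Even l.length := by
      simp [Nat.even_add_one]
    rcases Nat.even_or_odd l.length with h | h
    · simp [takeEven, takeOdd, (ih l₂).1, (ih l₂).2, h, Nat.even_add_one]
    · have h0 : ¬ Even l.length := Nat.not_even_iff_odd.mpr h
      simp [takeEven, takeOdd, (ih l₂).1, (ih l₂).2, h0, Nat.even_add_one]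

lemma sort_add_of_le (s t : Multiset ℕ)
    (h : ∀ a ∈ s, ∀ b ∈ t, a ≤ b) :
    (s + t).sort (· ≤ ·) = s.sort (· ≤ ·) ++ t.sort (· ≤ ·) := by
  refine (fun hp h1 h2 => List.Perm.eq_of_pairwise' (r := (· ≤ ·)) h1 h2 hp) ?_ ?_ ?_
  · rw [← Multiset.coe_eq_coe]
    simp [← Multiset.coe_add, Multiset.sort_eq]
  · exact Multiset.pairwise_sort _ _
  · rw [List.pairwise_append]
    refine ⟨Multiset.pairwise_sort _ _, Multiset.pairwise_sort _ _, ?_⟩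
    intro a ha b hb
    exact h a (by simpa using Multiset.mem_sort _ |>.mp ha)
      b (by simpa using Multiset.mem_sort _ |>.mp hb)

theorem stmt_6 (Δ₁ Δ₂ : Set (Finset ℕ))
    (h₁ : SortableWrt Δ₁) (h₂ : SortableWrt Δ₂)
    (hlt : ∀ a ∈ vertexSet Δ₁, ∀ b ∈ vertexSet Δ₂, a < b)
    (F₁ G₁ : Finset ℕ) (hF₁ : F₁ ∈ Δ₁) (hG₁ : G₁ ∈ Δ₁)
    (F₂ G₂ : Finset ℕ) (hF₂ : F₂ ∈ Δ₂) (hG₂ : G₂ ∈ Δ₂) :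
    (Even (F₁.card + G₁.card) →
      sortFst (F₁ ∪ F₂) (G₁ ∪ G₂) = sortFst F₁ G₁ ∪ sortFst F₂ G₂ ∧
      sortSnd (F₁ ∪ F₂) (G₁ ∪ G₂) = sortSnd F₁ G₁ ∪ sortSnd F₂ G₂) ∧
    (Odd (F₁.card + G₁.card) →
      sortFst (F₁ ∪ F₂) (G₁ ∪ G₂) = sortFst F₁ G₁ ∪ sortSnd F₂ G₂ ∧
      sortSnd (F₁ ∪ F₂) (G₁ ∪ G₂) = sortSnd F₁ G₁ ∪ sortFst F₂ G₂) := by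
  have hmem₁ : ∀ {H : Finset ℕ}, H ∈ Δ₁ → ∀ x ∈ H, x ∈ vertexSet Δ₁ := by
    intro H hH x hx
    exact Set.mem_biUnion hH hx
  have hmem₂ : ∀ {H : Finset ℕ}, H ∈ Δ₂ → ∀ x ∈ H, x ∈ vertexSet Δ₂ := by
    intro H hH x hx
    exact Set.mem_biUnion hH hx
  have hdisjF : Disjoint F₁ F₂ := by
    rw [Finset.disjoint_left]
    intro a ha ha'
    exact lt_irrefl a (hlt a (hmem₁ hF₁ a ha) a (hmem₂ hF₂ a ha'))
  have hdisjG : Disjoint G₁ G₂ := by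
    rw [Finset.disjoint_left]
    intro a ha ha'
    exact lt_irrefl a (hlt a (hmem₁ hG₁ a ha) a (hmem₂ hG₂ a ha'))
  have hFval : (F₁ ∪ F₂).val = F₁.val + F₂.val := by
    rw [← Finset.disjUnion_eq_union _ _ hdisjF]; rfl
  have hGval : (G₁ ∪ G₂).val = G₁.val + G₂.val := by
    rw [← Finset.disjUnion_eq_union _ _ hdisjG]; rfl
  have hle : ∀ a ∈ F₁.val + G₁.val, ∀ b ∈ F₂.val + G₂.val, a ≤ b := by
    intro a ha b hb
    have ha' : a ∈ vertexSet Δ₁ := by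
      rcases Multiset.mem_add.mp ha with h | h
      · exact hmem₁ hF₁ a h
      · exact hmem₁ hG₁ a h
    have hb' : b ∈ vertexSet Δ₂ := by
      rcases Multiset.mem_add.mp hb with h | h
      · exact hmem₂ hF₂ b h
      · exact hmem₂ hG₂ b h
    exact le_of_lt (hlt a ha' b hb')
  have hsum : (F₁ ∪ F₂).val + (G₁ ∪ G₂).val
      = (F₁.val + G₁.val) + (F₂.val + G₂.val) := by
    rw [hFval, hGval]; exact add_add_add_comm _ _ _ _
  set l₁ := (F₁.val + G₁.val).sort (· ≤ ·) with hl₁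
  set l₂ := (F₂.val + G₂.val).sort (· ≤ ·) with hl₂
  have hsort : ((F₁ ∪ F₂).val + (G₁ ∪ G₂).val).sort (· ≤ ·) = l₁ ++ l₂ := by
    rw [hsum]; exact sort_add_of_le _ _ hle
  have hlen : l₁.length = F₁.card + G₁.card := by
    rw [hl₁, Multiset.length_sort, Multiset.card_add]
    rfl
  constructor
  · intro heven
    have hE : Even l₁.length := by rw [hlen]; exact heven
    constructor
    · rw [sortFst_eq, sortFst_eq, sortFst_eq, hsort, (takeEven_append l₁ l₂).1,
        if_pos hE, List.toFinset_append]
    · rw [sortSnd_eq, sortSnd_eq, sortSnd_eq, hsort, (takeEven_append l₁ l₂).2,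
        if_pos hE, List.toFinset_append]
  · intro hodd
    have hE : ¬ Even l₁.length := by
      rw [hlen]; exact Nat.not_even_iff_odd.mpr hodd
    constructor
    · rw [sortFst_eq, sortFst_eq, sortSnd_eq, hsort, (takeEven_append l₁ l₂).1,
        if_neg hE, List.toFinset_append]
    · rw [sortSnd_eq, sortSnd_eq, sortFst_eq, hsort, (takeEven_append l₁ l₂).2,
        if_neg hE, List.toFinset_append]
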